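/- For the deformed Kepler–Coulomb geodesic Hamiltonian T̃_c = T_c/(1 − λ/r), r = √(x^2+y^2), the angular-type integral K̃_{c2} (which in polar coordinates reads p_φ^2 + (k_2/sin^2 φ + k_3 cos φ/sin^2 φ) p_z^2 and is independent of λ) Poisson-commutes with T̃_c on the open set where y ≠ 0 and r ≠ λ. -/

import Mathlib

/-- Canonical Poisson bracket on phase space ℝ³ × ℝ³ with coordinates (x,y,z,pₓ,p_y,p_z). -/
noncomputable def pb (F G : ℝ → ℝ → ℝ → ℝ → ℝ → ℝ → ℝ) (x y z px py pz : ℝ) : ℝ :=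
    deriv (fun t => F t y z px py pz) x * deriv (fun t => G x y z t py pz) px
  + deriv (fun t => F x t z px py pz) y * deriv (fun t => G x y z px t pz) py
  + deriv (fun t => F x y t px py pz) z * deriv (fun t => G x y z px py t) pz
  - deriv (fun t => F x y z t py pz) px * deriv (fun t => G t y z px py pz) x
  - deriv (fun t => F x y z px t pz) py * deriv (fun t => G x t z px py pz) y
  - deriv (fun t => F x y z px py t) pz * deriv (fun t => G x y t px py pz) z

set_option maxHeartbeats 2000000 in
theorem stmt_12 (lam k1 k2 k3 : ℝ) (x y z px py pz : ℝ)
    (hy : y ≠ 0) (hr : Real.sqrt (x^2+y^2) ≠ lam) :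
    pb (fun x y _ px py pz =>
          ((1/2) * (px^2 + py^2 +
              (k1/Real.sqrt (x^2+y^2) + k2/y^2
                + k3*x/(y^2*Real.sqrt (x^2+y^2))) * pz^2))
            / (1 - lam/Real.sqrt (x^2+y^2)))
       (fun x y _ px py pz =>
          (x*py - y*px)^2 +
            ((k2*x^2 + k3*x*Real.sqrt (x^2+y^2))/y^2) * pz^2)
       x y z px py pz = 0 := by
  have hpos : (0:ℝ) < x^2 + y^2 := by positivity
  have hrpos : (0:ℝ) < Real.sqrt (x^2+y^2) := Real.sqrt_pos.mpr hpos
  have hrne : Real.sqrt (x^2+y^2) ≠ 0 := hrpos.ne'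
  have hDne : 1 - lam / Real.sqrt (x^2+y^2) ≠ 0 := by
    rw [sub_ne_zero]
    intro h
    apply hr
    field_simp at h
    exact h
  -- derivatives in x direction
  have h1 : HasDerivAt (fun t:ℝ => t^2+y^2) (2*x) x := by
    simpa using ((hasDerivAt_pow 2 x).add_const (y^2))
  have hs : HasDerivAt (fun t:ℝ => Real.sqrt (t^2+y^2))
      (2*x / (2 * Real.sqrt (x^2+y^2))) x := h1.sqrt hpos.ne'
  have hFx := ((((((hasDerivAt_const x k1).div hs hrne).add_const (k2/y^2)).add
      ((((hasDerivAt_id' (x := x)).const_mul k3).div (hs.const_mul (y^2))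
        (mul_ne_zero (pow_ne_zero 2 hy) hrne)))).mul_const (pz^2)).const_add
        (px^2+py^2)).const_mul (1/2) |>.div
      (((hasDerivAt_const x lam).div hs hrne).const_sub 1) hDne
  have hGx := ((((hasDerivAt_id' (x := x)).mul_const py).sub_const (y*px)).pow 2).add
      (((((hasDerivAt_pow 2 x).const_mul k2).add
        (((hasDerivAt_id' (x := x)).const_mul k3).mul hs)).div_const (y^2)).mul_const (pz^2))
  -- derivatives in y direction
  have h2 : HasDerivAt (fun t:ℝ => x^2+t^2) (2*y) y := by
    simpa using ((hasDerivAt_pow 2 y).const_add (x^2))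
  have hs2 : HasDerivAt (fun t:ℝ => Real.sqrt (x^2+t^2))
      (2*y / (2 * Real.sqrt (x^2+y^2))) y := h2.sqrt hpos.ne'
  have hFy := (((((((hasDerivAt_const y k1).div hs2 hrne).add
      ((hasDerivAt_const y k2).div (hasDerivAt_pow 2 y) (pow_ne_zero 2 hy))).add
      ((hasDerivAt_const y (k3*x)).div ((hasDerivAt_pow 2 y).mul hs2)
        (mul_ne_zero (pow_ne_zero 2 hy) hrne))).mul_const (pz^2)).const_add
        (px^2+py^2)).const_mul (1/2)).div
      (((hasDerivAt_const y lam).div hs2 hrne).const_sub 1) hDne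
  have hGy := ((((hasDerivAt_id' (x := y)).mul_const px).const_sub (x*py)).pow 2).add
      ((((hs2.const_mul (k3*x)).const_add (k2*x^2)).div (hasDerivAt_pow 2 y)
        (pow_ne_zero 2 hy)).mul_const (pz^2))
  -- momentum derivatives
  have hFpx := ((((hasDerivAt_pow 2 px).add_const (py^2)).add_const
      ((k1/Real.sqrt (x^2+y^2) + k2/y^2
        + k3*x/(y^2*Real.sqrt (x^2+y^2))) * pz^2)).const_mul (1/2)).div_const
      (1 - lam/Real.sqrt (x^2+y^2))
  have hFpy := ((((hasDerivAt_pow 2 py).const_add (px^2)).add_const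
      ((k1/Real.sqrt (x^2+y^2) + k2/y^2
        + k3*x/(y^2*Real.sqrt (x^2+y^2))) * pz^2)).const_mul (1/2)).div_const
      (1 - lam/Real.sqrt (x^2+y^2))
  have hFpz := ((((hasDerivAt_pow 2 pz).const_mul
      (k1/Real.sqrt (x^2+y^2) + k2/y^2
        + k3*x/(y^2*Real.sqrt (x^2+y^2)))).const_add (px^2+py^2)).const_mul
      (1/2)).div_const (1 - lam/Real.sqrt (x^2+y^2))
  have hGpx := ((((hasDerivAt_id' (x := px)).const_mul y).const_sub (x*py)).pow 2).add_const
      (((k2*x^2 + k3*x*Real.sqrt (x^2+y^2))/y^2) * pz^2)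
  have hGpy := ((((hasDerivAt_id' (x := py)).const_mul x).sub_const (y*px)).pow 2).add_const
      (((k2*x^2 + k3*x*Real.sqrt (x^2+y^2))/y^2) * pz^2)
  have hGpz := (((hasDerivAt_pow 2 pz).const_mul
      ((k2*x^2 + k3*x*Real.sqrt (x^2+y^2))/y^2)).const_add ((x*py - y*px)^2))
  simp only [pb]
  erw [hFx.deriv, hGx.deriv, hFy.deriv, hGy.deriv, hFpx.deriv, hFpy.deriv,
    hFpz.deriv, hGpx.deriv, hGpy.deriv, hGpz.deriv, deriv_const, deriv_const]
  simp only [Pi.div_apply, Pi.mul_apply, Pi.add_apply, Pi.sub_apply, Pi.pow_apply]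
  have hr2 : Real.sqrt (x^2+y^2) ^ 2 = x^2+y^2 := Real.sq_sqrt hpos.le
  set r := Real.sqrt (x^2+y^2) with hrdef
  have hlr : r - lam ≠ 0 := sub_ne_zero.mpr hr
  have hone : 1 - lam/r = (r - lam)/r := by field_simp
  rw [hone]
  field_simp
  ring_nf
  have h2 : r^2 = (x^2+y^2)^1 := by rw [show (2:ℕ)=2*1 from rfl, pow_mul, hr2]
  have h3 : r^3 = (x^2+y^2)^1 * r := by rw [pow_succ, h2]
  have h4 : r^4 = (x^2+y^2)^2 := by rw [show (4:ℕ)=2*2 from rfl, pow_mul, hr2]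
  have h5 : r^5 = (x^2+y^2)^2 * r := by rw [pow_succ, h4]
  have h6 : r^6 = (x^2+y^2)^3 := by rw [show (6:ℕ)=2*3 from rfl, pow_mul, hr2]
  have h7 : r^7 = (x^2+y^2)^3 * r := by rw [pow_succ, h6]
  have h8 : r^8 = (x^2+y^2)^4 := by rw [show (8:ℕ)=2*4 from rfl, pow_mul, hr2]
  have h9 : r^9 = (x^2+y^2)^4 * r := by rw [pow_succ, h8]
  have h10 : r^10 = (x^2+y^2)^5 := by rw [show (10:ℕ)=2*5 from rfl, pow_mul, hr2]
  have h11 : r^11 = (x^2+y^2)^5 * r := by rw [pow_succ, h10]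
  have h12 : r^12 = (x^2+y^2)^6 := by rw [show (12:ℕ)=2*6 from rfl, pow_mul, hr2]
  have h13 : r^13 = (x^2+y^2)^6 * r := by rw [pow_succ, h12]
  have h14 : r^14 = (x^2+y^2)^7 := by rw [show (14:ℕ)=2*7 from rfl, pow_mul, hr2]
  have h15 : r^15 = (x^2+y^2)^7 * r := by rw [pow_succ, h14]
  have h16 : r^16 = (x^2+y^2)^8 := by rw [show (16:ℕ)=2*8 from rfl, pow_mul, hr2]
  have h17 : r^17 = (x^2+y^2)^8 * r := by rw [pow_succ, h16]
  have h18 : r^18 = (x^2+y^2)^9 := by rw [show (18:ℕ)=2*9 from rfl, pow_mul, hr2]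
  have h19 : r^19 = (x^2+y^2)^9 * r := by rw [pow_succ, h18]
  have h20 : r^20 = (x^2+y^2)^10 := by rw [show (20:ℕ)=2*10 from rfl, pow_mul, hr2]
  have h21 : r^21 = (x^2+y^2)^10 * r := by rw [pow_succ, h20]
  have h22 : r^22 = (x^2+y^2)^11 := by rw [show (22:ℕ)=2*11 from rfl, pow_mul, hr2]
  have h23 : r^23 = (x^2+y^2)^11 * r := by rw [pow_succ, h22]
  have h24 : r^24 = (x^2+y^2)^12 := by rw [show (24:ℕ)=2*12 from rfl, pow_mul, hr2]
  have h25 : r^25 = (x^2+y^2)^12 * r := by rw [pow_succ, h24]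
  have h26 : r^26 = (x^2+y^2)^13 := by rw [show (26:ℕ)=2*13 from rfl, pow_mul, hr2]
  have h27 : r^27 = (x^2+y^2)^13 * r := by rw [pow_succ, h26]
  have h28 : r^28 = (x^2+y^2)^14 := by rw [show (28:ℕ)=2*14 from rfl, pow_mul, hr2]
  have h29 : r^29 = (x^2+y^2)^14 * r := by rw [pow_succ, h28]
  have h30 : r^30 = (x^2+y^2)^15 := by rw [show (30:ℕ)=2*15 from rfl, pow_mul, hr2]
  have h31 : r^31 = (x^2+y^2)^15 * r := by rw [pow_succ, h30]
  have h32 : r^32 = (x^2+y^2)^16 := by rw [show (32:ℕ)=2*16 from rfl, pow_mul, hr2]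
  have h33 : r^33 = (x^2+y^2)^16 * r := by rw [pow_succ, h32]
  have h34 : r^34 = (x^2+y^2)^17 := by rw [show (34:ℕ)=2*17 from rfl, pow_mul, hr2]
  have h35 : r^35 = (x^2+y^2)^17 * r := by rw [pow_succ, h34]
  have h36 : r^36 = (x^2+y^2)^18 := by rw [show (36:ℕ)=2*18 from rfl, pow_mul, hr2]
  have h37 : r^37 = (x^2+y^2)^18 * r := by rw [pow_succ, h36]
  have h38 : r^38 = (x^2+y^2)^19 := by rw [show (38:ℕ)=2*19 from rfl, pow_mul, hr2]
  have h39 : r^39 = (x^2+y^2)^19 * r := by rw [pow_succ, h38]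
  have h40 : r^40 = (x^2+y^2)^20 := by rw [show (40:ℕ)=2*20 from rfl, pow_mul, hr2]
  simp only [h40, h39, h38, h37, h36, h35, h34, h33, h32, h31, h30, h29, h28, h27, h26, h25, h24, h23, h22, h21, h20, h19, h18, h17, h16, h15, h14, h13, h12, h11, h10, h9, h8, h7, h6, h5, h4, h3, h2]
  ring
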